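/- arXiv:0707.0537 — 2 statements merged into one kernel-verified Lean document; each statement's English description precedes it below -/
import Mathlib

section
/- Let δ, δ' ≥ 2 be real numbers and fix x ∈ ℝ. Suppose (m_n)_{n∈ℕ} is a family of differentiable functions m_n : [0,∞) → ℝ with m_0(t) = 1 for all t ≥ 0, m_n(0) = x^n, and m_n'(t) = −a_n m_n(t) + c_n(δ') m_{n−1}(t) for all n ≥ 1 and t ≥ 0. Then for all n ∈ ℕ and t ≥ 0: m_n(t) = e^{−a_n t} x^n + Σ_{k=1}^{n} c_n(δ') c_{n−1}(δ') ⋯ c_{n−k+1}(δ') · B_t(a_n, a_{n−1}, …, a_{n−k}) · x^{n−k}, and moreover each coefficient c_n(δ') ⋯ c_{n−k+1}(δ') · B_t(a_n, …, a_{n−k}) is nonnegative for every t ≥ 0. -/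
open Finset Real

/-- `aC δ δ' n = n (2(n-1) + δ + δ')`. -/
noncomputable def aC (δ δ' : ℝ) (n : ℕ) : ℝ := (n : ℝ) * (2 * ((n : ℝ) - 1) + δ + δ')

/-- `cC γ n = n (2(n-1) + γ)`. -/
noncomputable def cC (γ : ℝ) (n : ℕ) : ℝ := (n : ℝ) * (2 * ((n : ℝ) - 1) + γ)

/-- `Bt t k b = B_t(b 0, …, b k)`. -/
noncomputable def Bt (t : ℝ) (k : ℕ) (b : ℕ → ℝ) : ℝ :=
  (-1 : ℝ) ^ k * ∑ j ∈ Finset.range (k + 1),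
    (-1 : ℝ) ^ j * Real.exp (-(b j) * t) /
      ∏ l ∈ (Finset.range (k + 1)).erase j, |b j - b l|

lemma cC_nonneg {γ : ℝ} (hγ : 0 ≤ γ) (r : ℕ) : 0 ≤ cC γ r := by
  unfold cC
  rcases Nat.eq_zero_or_pos r with h | h
  · simp [h]
  · have h1 : (1:ℝ) ≤ r := by exact_mod_cast h
    nlinarith

lemma aC_mono {δ δ' : ℝ} (hδ : 2 ≤ δ) (hδ' : 2 ≤ δ') {i j : ℕ} (h : i < j) :
    aC δ δ' i < aC δ δ' j := by
  unfold aC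
  have h1 : (i:ℝ) < j := by exact_mod_cast h
  have h2 : (0:ℝ) ≤ i := Nat.cast_nonneg i
  nlinarith

lemma sum_nodalWeight_zero {s : Finset ℕ} {v : ℕ → ℝ} (hvs : Set.InjOn v s)
    (hs : 2 ≤ s.card) : ∑ i ∈ s, ∏ j ∈ s.erase i, (v i - v j)⁻¹ = 0 := by
  classical
  have hne : s.Nonempty := Finset.card_pos.mp (by omega)
  have h1 : Lagrange.interpolate s v 1 = 1 := Lagrange.interpolate_one hvs hne
  have h2 := congrArg (fun p => Polynomial.coeff p (s.card - 1)) h1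
  simp only [Lagrange.interpolate_apply, Pi.one_apply, map_one, one_mul,
    Polynomial.finset_sum_coeff] at h2
  have h3 : ∀ i ∈ s, (Lagrange.basis s v i).coeff (s.card - 1)
      = ∏ j ∈ s.erase i, (v i - v j)⁻¹ := by
    intro i hi
    have hdeg := Lagrange.natDegree_basis hvs hi
    have : (Lagrange.basis s v i).coeff (s.card - 1) = (Lagrange.basis s v i).leadingCoeff := by
      rw [← hdeg]; rfl
    rw [this, Lagrange.basis, Polynomial.leadingCoeff_prod]
    apply Finset.prod_congr rfl
    intro j hj
    have hij : v i ≠ v j := by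
      rcases Finset.mem_erase.mp hj with ⟨hji, hjs⟩
      intro hEq
      rcases Finset.mem_erase.mp hj with ⟨hji2, _⟩
      exact hji2 (hvs (Finset.mem_coe.mpr hjs) (Finset.mem_coe.mpr hi) hEq.symm)
    rw [Lagrange.basisDivisor]
    rw [Polynomial.leadingCoeff_mul, Polynomial.leadingCoeff_C,
      (Polynomial.monic_X_sub_C (v j)).leadingCoeff, mul_one]
  rw [Finset.sum_congr rfl h3] at h2
  rw [h2]
  rw [Polynomial.coeff_one]
  simp only [if_neg (by omega : ¬ s.card - 1 = 0)]

section BtLemmas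
variable {k : ℕ} {b : ℕ → ℝ}

def SDec (k : ℕ) (b : ℕ → ℝ) : Prop := ∀ i j : ℕ, i < j → j ≤ k → b j < b i

lemma SDec.ne (hb : SDec k b) {i j : ℕ} (hij : i ≠ j) (hi : i ≤ k) (hj : j ≤ k) :
    b i ≠ b j := by
  rcases lt_or_gt_of_ne hij with h | h
  · exact (hb i j h hj).ne'
  · exact (hb j i h hi).ne

lemma prod_abs_pos (hb : SDec k b) {j : ℕ} (hj : j ≤ k) :
    0 < ∏ l ∈ (Finset.range (k+1)).erase j, |b j - b l| := by
  apply Finset.prod_pos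
  intro l hl
  rcases Finset.mem_erase.mp hl with ⟨hlj, hlr⟩
  have hlk : l ≤ k := by have := Finset.mem_range.mp hlr; omega
  exact abs_pos.mpr (sub_ne_zero.mpr (hb.ne (Ne.symm hlj) hj hlk))

lemma prod_sub_sign (hb : SDec k b) {j : ℕ} (hj : j ≤ k) :
    ∏ l ∈ (Finset.range (k+1)).erase j, (b j - b l)
      = (-1 : ℝ)^j * ∏ l ∈ (Finset.range (k+1)).erase j, |b j - b l| := by
  have h1 : ∀ l ∈ (Finset.range (k+1)).erase j,
      (b j - b l) = (if l < j then (-1:ℝ) else 1) * |b j - b l| := by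
    intro l hl
    rcases Finset.mem_erase.mp hl with ⟨hlj, hlr⟩
    have hlk : l ≤ k := by have := Finset.mem_range.mp hlr; omega
    by_cases h : l < j
    · have : b j < b l := hb l j h hj
      rw [if_pos h, abs_of_neg (by linarith), neg_one_mul, neg_neg]
    · have hjl : j < l := by omega
      have : b l < b j := hb j l hjl hlk
      rw [if_neg h, abs_of_pos (by linarith), one_mul]
  rw [Finset.prod_congr rfl h1, Finset.prod_mul_distrib]
  congr 1
  rw [Finset.prod_ite, Finset.prod_const, Finset.prod_const, one_pow, mul_one]
  congr 1
  have hfil : Finset.filter (· < j) ((Finset.range (k+1)).erase j) = Finset.range j := by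
    ext l; simp; omega
  rw [hfil, Finset.card_range]

lemma Bt_zero_left (t : ℝ) (b : ℕ → ℝ) : Bt t 0 b = Real.exp (-(b 0) * t) := by
  simp [Bt]

lemma Bt_at_zero (hk : 1 ≤ k) (hb : SDec k b) : Bt 0 k b = 0 := by
  have hinj : Set.InjOn b (Finset.range (k+1)) := by
    intro i hi j hj hij
    by_contra hne
    exact hb.ne hne (by simpa using Nat.lt_succ_iff.mp (Finset.mem_range.mp (by simpa using hi)))
      (by simpa using Nat.lt_succ_iff.mp (Finset.mem_range.mp (by simpa using hj))) hij
  have h0 := sum_nodalWeight_zero hinj (by simp; omega)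
  unfold Bt
  rw [show (∑ j ∈ Finset.range (k + 1),
      (-1 : ℝ) ^ j * Real.exp (-(b j) * 0) / ∏ l ∈ (Finset.range (k + 1)).erase j, |b j - b l|)
      = ∑ j ∈ Finset.range (k+1), ∏ l ∈ (Finset.range (k+1)).erase j, (b j - b l)⁻¹ from ?_, h0, mul_zero]
  apply Finset.sum_congr rfl
  intro j hj
  have hjk : j ≤ k := Nat.lt_succ_iff.mp (Finset.mem_range.mp hj)
  rw [Finset.prod_inv_distrib, prod_sub_sign hb hjk, mul_zero, Real.exp_zero, mul_one]
  rw [mul_inv]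
  rw [show ((-1:ℝ)^j)⁻¹ = (-1:ℝ)^j by rw [← inv_pow]; norm_num]
  rw [div_eq_mul_inv]

lemma Bt_hasDerivAt (hk : 1 ≤ k) (hb : SDec k b) (t : ℝ) :
    HasDerivAt (fun t => Bt t k b)
      (-(b 0) * Bt t k b + Bt t (k-1) (fun j => b (j+1))) t := by
  obtain ⟨k', rfl⟩ : ∃ k', k = k' + 1 := ⟨k - 1, by omega⟩
  set P : ℕ → ℝ := fun j => ∏ l ∈ (Finset.range (k'+1+1)).erase j, |b j - b l| with hP
  set Q : ℕ → ℝ := fun j => ∏ l ∈ (Finset.range (k'+1)).erase j, |b (j+1) - b (l+1)| with hQ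
  have hder : HasDerivAt (fun t => Bt t (k'+1) b)
      ((-1:ℝ)^(k'+1) * ∑ j ∈ Finset.range (k'+1+1),
        (-(b j)) * ((-1:ℝ)^j * Real.exp (-(b j) * t) / P j)) t := by
    unfold Bt
    apply HasDerivAt.const_mul
    apply HasDerivAt.fun_sum
    intro j hj
    have h1 : HasDerivAt (fun t : ℝ => -(b j) * t) (-(b j)) t := by
      simpa using (hasDerivAt_id t).const_mul (-(b j))
    have h2 := (h1.exp.const_mul ((-1:ℝ)^j)).div_const (P j)
    exact h2.congr_deriv (by ring)
  convert hder using 1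
  have hsplit : ∀ j ∈ Finset.range (k'+1+1),
      (-(b j)) * ((-1:ℝ)^j * Real.exp (-(b j) * t) / P j)
      = (-(b 0)) * ((-1:ℝ)^j * Real.exp (-(b j) * t) / P j)
        + (b 0 - b j) * ((-1:ℝ)^j * Real.exp (-(b j) * t) / P j) := by
    intro j _; ring
  rw [Finset.sum_congr rfl hsplit, Finset.sum_add_distrib, mul_add, ← Finset.mul_sum]
  have hfirst : (-1:ℝ)^(k'+1) * ((-(b 0)) * ∑ j ∈ Finset.range (k'+1+1),
      (-1:ℝ)^j * Real.exp (-(b j) * t) / P j) = -(b 0) * Bt t (k'+1) b := by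
    unfold Bt; ring
  rw [hfirst]
  congr 1
  set g : ℕ → ℝ := fun x => (b 0 - b x) * ((-1:ℝ)^x * Real.exp (-(b x) * t) / P x) with hg
  have hsum : ∑ x ∈ Finset.range (k'+1+1), g x = ∑ j ∈ Finset.range (k'+1), g (j+1) := by
    rw [Finset.sum_range_succ']
    simp [hg]
  rw [hsum]
  have htail : ∀ j ∈ Finset.range (k'+1), P (j+1) = (b 0 - b (j+1)) * Q j := by
    intro j hj
    have hjk : j < k'+1 := Finset.mem_range.mp hj
    have h0mem : (0:ℕ) ∈ (Finset.range (k'+1+1)).erase (j+1) := by simp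
    show (∏ l ∈ (Finset.range (k'+1+1)).erase (j+1), |b (j+1) - b l|) = _
    rw [← Finset.mul_prod_erase _ _ h0mem]
    have habs : |b (j+1) - b 0| = b 0 - b (j+1) := by
      have := hb 0 (j+1) (by omega) (by omega)
      rw [abs_of_neg (by linarith)]; ring
    rw [habs]
    congr 1
    have hset : ((Finset.range (k'+1+1)).erase (j+1)).erase 0
        = Finset.image (· + 1) ((Finset.range (k'+1)).erase j) := by
      ext l
      simp only [Finset.mem_erase, Finset.mem_range, Finset.mem_image]
      constructor
      · intro ⟨h1, h2, h3⟩
        exact ⟨l - 1, by omega, by omega⟩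
      · rintro ⟨m, ⟨hm1, hm2⟩, rfl⟩
        omega
    rw [hset, Finset.prod_image (fun a _ c _ h => by omega)]
  show Bt t k' (fun j => b (j+1)) = _
  unfold Bt
  rw [Finset.mul_sum, Finset.mul_sum]
  apply Finset.sum_congr rfl
  intro j hj
  have hjk : j < k'+1 := Finset.mem_range.mp hj
  have hpos : (0:ℝ) < b 0 - b (j+1) := by
    have := hb 0 (j+1) (by omega) (by omega)
    linarith
  have hQpos : (0:ℝ) < Q j := by
    apply Finset.prod_pos
    intro l hl
    rcases Finset.mem_erase.mp hl with ⟨hlj, hlr⟩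
    have hlk : l < k'+1 := Finset.mem_range.mp hlr
    exact abs_pos.mpr (sub_ne_zero.mpr (hb.ne (by omega) (by omega) (by omega)))
  rw [hg]
  show (-1:ℝ)^k' * ((-1:ℝ)^j * Real.exp (-(b (j+1)) * t) / Q j)
      = (-1:ℝ)^(k'+1) * ((b 0 - b (j+1)) * ((-1:ℝ)^(j+1) * Real.exp (-(b (j+1)) * t) / P (j+1)))
  rw [htail j hj]
  field_simp
  ring

end BtLemmas

lemma monoIci {g g' : ℝ → ℝ} (hg : ∀ t ∈ Set.Ici (0:ℝ), HasDerivAt g (g' t) t)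
    (h0 : ∀ t ∈ Set.Ioi (0:ℝ), 0 ≤ g' t) : MonotoneOn g (Set.Ici 0) := by
  apply monotoneOn_of_deriv_nonneg (convex_Ici 0)
  · exact fun t ht => (hg t ht).continuousAt.continuousWithinAt
  · intro t ht
    rw [interior_Ici] at ht
    exact ((hg t (Set.mem_Ici.mpr (le_of_lt ht))).differentiableAt).differentiableWithinAt
  · intro t ht
    rw [interior_Ici] at ht
    rw [(hg t (Set.mem_Ici.mpr (le_of_lt ht))).deriv]
    exact h0 t ht

lemma Bt_nonneg : ∀ (k : ℕ) (b : ℕ → ℝ), SDec k b → ∀ t : ℝ, 0 ≤ t → 0 ≤ Bt t k b := by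
  intro k
  induction k with
  | zero =>
    intro b _ t _
    rw [Bt_zero_left]
    positivity
  | succ k ih =>
    intro b hb t ht
    have hbt : SDec k (fun j => b (j+1)) := fun i j hij hjk => hb (i+1) (j+1) (by omega) (by omega)
    have hder : ∀ s : ℝ, HasDerivAt (fun t => Bt t (k+1) b)
        (-(b 0) * Bt s (k+1) b + Bt s k (fun j => b (j+1))) s := by
      intro s
      simpa using Bt_hasDerivAt (k := k+1) (by omega) hb s
    set g : ℝ → ℝ := fun s => Real.exp (b 0 * s) * Bt s (k+1) b with hgdef
    have hgder : ∀ s : ℝ, HasDerivAt g (Real.exp (b 0 * s) * Bt s k (fun j => b (j+1))) s := by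
      intro s
      have h1 : HasDerivAt (fun s : ℝ => Real.exp (b 0 * s)) (b 0 * Real.exp (b 0 * s)) s := by
        simpa [mul_comm] using ((hasDerivAt_id s).const_mul (b 0)).exp
      have := h1.fun_mul (hder s)
      exact this.congr_deriv (by ring)
    have hmono : MonotoneOn g (Set.Ici 0) := by
      apply monoIci (fun s _ => hgder s)
      intro s hs
      have := ih (fun j => b (j+1)) hbt s (le_of_lt hs)
      positivity
    have h0 : g 0 = 0 := by
      rw [hgdef]
      simp [Bt_at_zero (k := k+1) (by omega) hb]
    have := hmono (Set.self_mem_Ici) (Set.mem_Ici.mpr ht) ht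
    rw [h0] at this
    have hexp : 0 < Real.exp (b 0 * t) := Real.exp_pos _
    have hgt : g t = Real.exp (b 0 * t) * Bt t (k+1) b := rfl
    rw [hgt] at this
    exact le_of_not_gt fun hlt => absurd this (not_le.mpr (mul_neg_of_pos_of_neg hexp hlt))

theorem stmt1 (δ δ' : ℝ) (hδ : 2 ≤ δ) (hδ' : 2 ≤ δ') (x : ℝ)
    (m : ℕ → ℝ → ℝ)
    (h0 : ∀ t : ℝ, 0 ≤ t → m 0 t = 1)
    (hinit : ∀ n : ℕ, m n 0 = x ^ n)
    (hode : ∀ n : ℕ, 1 ≤ n → ∀ t : ℝ, 0 ≤ t →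
      HasDerivAt (m n) (-(aC δ δ' n) * m n t + cC δ' n * m (n - 1) t) t) :
    ∀ n : ℕ, ∀ t : ℝ, 0 ≤ t →
      (m n t = Real.exp (-(aC δ δ' n) * t) * x ^ n +
          ∑ k ∈ Finset.Icc 1 n,
            (∏ r ∈ Finset.Icc (n - k + 1) n, cC δ' r) *
              Bt t k (fun j => aC δ δ' (n - j)) * x ^ (n - k)) ∧
      (∀ k ∈ Finset.Icc 1 n,
        0 ≤ (∏ r ∈ Finset.Icc (n - k + 1) n, cC δ' r) * Bt t k (fun j => aC δ δ' (n - j))) := by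
  have hSD : ∀ n k : ℕ, k ≤ n → SDec k (fun j => aC δ δ' (n - j)) := by
    intro n k hkn i j hij hjk
    exact aC_mono hδ hδ' (show n - j < n - i by omega)
  have hprodnn : ∀ n k : ℕ, 0 ≤ ∏ r ∈ Finset.Icc (n - k + 1) n, cC δ' r :=
    fun n k => Finset.prod_nonneg fun r _ => cC_nonneg (by linarith) r
  have hnn : ∀ (n : ℕ) (t : ℝ), 0 ≤ t → ∀ k ∈ Finset.Icc 1 n,
      0 ≤ (∏ r ∈ Finset.Icc (n - k + 1) n, cC δ' r) * Bt t k (fun j => aC δ δ' (n - j)) := by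
    intro n t ht k hk
    rcases Finset.mem_Icc.mp hk with ⟨hk1, hk2⟩
    exact mul_nonneg (hprodnn n k) (Bt_nonneg k _ (hSD n k hk2) t ht)
  have hform : ∀ (n : ℕ) (t : ℝ), 0 ≤ t → m n t = Real.exp (-(aC δ δ' n) * t) * x ^ n +
      ∑ k ∈ Finset.Icc 1 n, (∏ r ∈ Finset.Icc (n - k + 1) n, cC δ' r) *
        Bt t k (fun j => aC δ δ' (n - j)) * x ^ (n - k) := by
    intro n
    induction n with
    | zero =>
      intro t ht
      rw [Finset.Icc_eq_empty (by omega)]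
      simp [h0 t ht, aC]
    | succ n ih =>
      set a := aC δ δ' with ha
      set bfun : ℕ → ℝ := fun j => a (n + 1 - j) with hbfun
      set M : ℝ → ℝ := fun t => Real.exp (-(a (n+1)) * t) * x ^ (n+1) +
        ∑ k ∈ Finset.Icc 1 (n+1), (∏ r ∈ Finset.Icc (n+1-k+1) (n+1), cC δ' r) *
          Bt t k bfun * x ^ (n+1-k) with hM
      have hb0 : bfun 0 = a (n+1) := rfl
      have htailf : (fun j => bfun (j+1)) = (fun j => a (n - j)) := by
        funext j
        show a (n+1-(j+1)) = a (n - j)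
        congr 1
        omega
      have hMder : ∀ t : ℝ, 0 ≤ t → HasDerivAt M (-(a (n+1)) * M t + cC δ' (n+1) * m n t) t := by
        intro t ht
        have hterm : ∀ k ∈ Finset.Icc 1 (n+1),
            HasDerivAt (fun t => (∏ r ∈ Finset.Icc (n+1-k+1) (n+1), cC δ' r) *
                Bt t k bfun * x ^ (n+1-k))
              ((∏ r ∈ Finset.Icc (n+1-k+1) (n+1), cC δ' r) *
                (-(bfun 0) * Bt t k bfun + Bt t (k-1) (fun j => bfun (j+1))) * x ^ (n+1-k)) t := by
          intro k hk
          rcases Finset.mem_Icc.mp hk with ⟨hk1, hk2⟩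
          exact ((Bt_hasDerivAt hk1 (hSD (n+1) k hk2) t).const_mul _).mul_const _
        have hexp : HasDerivAt (fun t => Real.exp (-(a (n+1)) * t) * x ^ (n+1))
            (-(a (n+1)) * Real.exp (-(a (n+1)) * t) * x ^ (n+1)) t := by
          have h1 : HasDerivAt (fun t : ℝ => -(a (n+1)) * t) (-(a (n+1))) t := by
            simpa using (hasDerivAt_id t).const_mul (-(a (n+1)))
          have h2 := (h1.exp).mul_const (x ^ (n+1))
          exact h2.congr_deriv (by ring)
        have hD := hexp.fun_add (HasDerivAt.fun_sum hterm)
        have hkey : ∑ k ∈ Finset.Icc 1 (n+1), (∏ r ∈ Finset.Icc (n+1-k+1) (n+1), cC δ' r) *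
            Bt t (k-1) (fun j => a (n - j)) * x ^ (n+1-k) = cC δ' (n+1) * m n t := by
          have himg : Finset.Icc 1 (n+1) = Finset.image (·+1) (Finset.range (n+1)) := by
            ext l
            simp only [Finset.mem_Icc, Finset.mem_image, Finset.mem_range]
            constructor
            · intro h
              exact ⟨l - 1, by omega, by omega⟩
            · rintro ⟨p, hp, rfl⟩
              omega
          rw [himg, Finset.sum_image (fun p _ q _ h => by omega)]
          simp only [Nat.add_sub_cancel, Nat.succ_sub_succ_eq_sub, Nat.sub_zero]
          have hstep : ∀ i ∈ Finset.range (n+1),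
              (∏ r ∈ Finset.Icc (n-i+1) (n+1), cC δ' r) * Bt t i (fun j => a (n - j)) * x ^ (n-i)
              = cC δ' (n+1) * ((∏ r ∈ Finset.Icc (n-i+1) n, cC δ' r) *
                  Bt t i (fun j => a (n - j)) * x ^ (n-i)) := by
            intro i _
            rw [Finset.prod_Icc_succ_top (show n-i+1 ≤ n+1 by omega)]
            ring
          rw [Finset.sum_congr rfl hstep, ← Finset.mul_sum]
          congr 1
          have hins : Finset.range (n+1) = insert 0 (Finset.Icc 1 n) := by
            ext l
            simp only [Finset.mem_range, Finset.mem_insert, Finset.mem_Icc]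
            omega
          rw [hins, Finset.sum_insert (by simp)]
          rw [ih t ht]
          congr 1
          rw [Finset.Icc_eq_empty (by omega), Finset.prod_empty, Bt_zero_left]
          show 1 * Real.exp (-(a (n - 0)) * t) * x ^ (n - 0) = _
          rw [Nat.sub_zero, one_mul]
        have hsum2 : ∑ k ∈ Finset.Icc 1 (n+1), (∏ r ∈ Finset.Icc (n+1-k+1) (n+1), cC δ' r) *
              (-(a (n+1)) * Bt t k bfun + Bt t (k-1) (fun j => a (n - j))) * x ^ (n+1-k)
            = (-(a (n+1))) * ∑ k ∈ Finset.Icc 1 (n+1),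
                (∏ r ∈ Finset.Icc (n+1-k+1) (n+1), cC δ' r) * Bt t k bfun * x ^ (n+1-k)
              + ∑ k ∈ Finset.Icc 1 (n+1), (∏ r ∈ Finset.Icc (n+1-k+1) (n+1), cC δ' r) *
                  Bt t (k-1) (fun j => a (n - j)) * x ^ (n+1-k) := by
          rw [Finset.mul_sum, ← Finset.sum_add_distrib]
          apply Finset.sum_congr rfl
          intro k _
          ring
        have hval : -(a (n+1)) * Real.exp (-(a (n+1)) * t) * x ^ (n+1)
            + ∑ k ∈ Finset.Icc 1 (n+1), (∏ r ∈ Finset.Icc (n+1-k+1) (n+1), cC δ' r) *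
                (-(bfun 0) * Bt t k bfun + Bt t (k-1) (fun j => bfun (j+1))) * x ^ (n+1-k)
            = -(a (n+1)) * M t + cC δ' (n+1) * m n t := by
          simp only [hb0, htailf]
          rw [hsum2, hkey]
          simp only [hM]
          ring
        rw [← hval]
        exact hD
      have hM0 : M 0 = x ^ (n+1) := by
        have hz : ∀ k ∈ Finset.Icc 1 (n+1), (∏ r ∈ Finset.Icc (n+1-k+1) (n+1), cC δ' r) *
            Bt 0 k bfun * x ^ (n+1-k) = 0 := by
          intro k hk
          rcases Finset.mem_Icc.mp hk with ⟨hk1, hk2⟩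
          have hb0k : Bt 0 k bfun = 0 := Bt_at_zero hk1 (hSD (n+1) k hk2)
          rw [hb0k, mul_zero, zero_mul]
        show Real.exp (-(a (n+1)) * 0) * x ^ (n+1) + _ = x ^ (n+1)
        rw [Finset.sum_eq_zero hz, add_zero, mul_zero, Real.exp_zero, one_mul]
      intro t ht
      have hhder : ∀ s : ℝ, 0 ≤ s → HasDerivAt (fun s => m (n+1) s - M s)
          (-(a (n+1)) * (m (n+1) s - M s)) s := by
        intro s hs
        have h1 : HasDerivAt (m (n+1)) (-(a (n+1)) * m (n+1) s + cC δ' (n+1) * m n s) s :=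
          hode (n+1) (by omega) s hs
        have h2 := h1.fun_sub (hMder s hs)
        exact h2.congr_deriv (by ring)
      set g : ℝ → ℝ := fun s => Real.exp (a (n+1) * s) * (m (n+1) s - M s) with hg
      have hgder : ∀ s : ℝ, 0 ≤ s → HasDerivAt g 0 s := by
        intro s hs
        have h1 : HasDerivAt (fun s : ℝ => Real.exp (a (n+1) * s))
            (a (n+1) * Real.exp (a (n+1) * s)) s := by
          simpa [mul_comm] using ((hasDerivAt_id s).const_mul (a (n+1))).exp
        have h2 := h1.fun_mul (hhder s hs)
        exact h2.congr_deriv (by ring)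
      have hmono : MonotoneOn g (Set.Ici 0) :=
        monoIci (fun s hs => hgder s hs) (fun s _ => le_refl 0)
      have hanti : MonotoneOn (fun s => -(g s)) (Set.Ici 0) :=
        monoIci (fun s hs => by simpa using (hgder s hs).fun_neg) (fun s _ => le_refl 0)
      have hg0 : g 0 = 0 := by
        show Real.exp (a (n+1) * 0) * (m (n+1) 0 - M 0) = 0
        rw [hM0, hinit (n+1), sub_self, mul_zero]
      have h1 := hmono Set.self_mem_Ici (Set.mem_Ici.mpr ht) ht
      have h2 : -(g 0) ≤ -(g t) := hanti Set.self_mem_Ici (Set.mem_Ici.mpr ht) ht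
      rw [hg0] at h1 h2
      have hgt : g t = 0 := by
        simp only [neg_zero] at h2
        linarith [neg_nonneg.mp h2]
      have hmn : m (n+1) t = M t := by
        have hexp : Real.exp (a (n+1) * t) ≠ 0 := (Real.exp_pos _).ne'
        have h3 : Real.exp (a (n+1) * t) * (m (n+1) t - M t) = 0 := hgt
        have h4 := (mul_eq_zero.mp h3).resolve_left hexp
        linarith
      exact hmn
  exact fun n t ht => ⟨hform n t ht, hnn n t ht⟩
end

section
/- Let k ≥ 0 be an integer, let b_0 > b_1 > … > b_k be strictly decreasing real numbers, and let t ≥ 0. Then B_t(b_0, b_1, …, b_k) ≥ 0. -/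
open Finset Real

section aux

variable {b : ℕ → ℝ} {k : ℕ}

/-- strict decrease on the window -/
lemma bdec (hb : ∀ m : ℕ, m < k → b (m + 1) < b m) :
    ∀ i j : ℕ, i < j → j ≤ k → b j < b i := by
  intro i j hij hjk
  induction j with
  | zero => omega
  | succ n ih =>
    have h1 : b (n+1) < b n := hb n (by omega)
    rcases Nat.lt_or_ge i n with h | h
    · exact lt_trans h1 (ih h (by omega))
    · have : i = n := by omega
      subst this; exact h1

lemma binj (hb : ∀ m : ℕ, m < k → b (m + 1) < b m) :
    Set.InjOn b ↑(Finset.range (k+1)) := by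
  intro i hi j hj hij
  simp only [coe_range, Set.mem_Iio] at hi hj
  by_contra h
  rcases Nat.lt_or_ge i j with h' | h'
  · exact absurd hij (bdec hb i j h' (by omega)).ne'
  · have h'' : j < i := by omega
    exact absurd hij (bdec hb j i h'' (by omega)).ne

lemma P_pos (hb : ∀ m : ℕ, m < k → b (m + 1) < b m) {j : ℕ} (hj : j < k + 1) :
    0 < ∏ l ∈ (Finset.range (k + 1)).erase j, |b j - b l| := by
  apply Finset.prod_pos
  intro l hl
  rw [Finset.mem_erase, Finset.mem_range] at hl
  rw [abs_pos, sub_ne_zero]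
  intro h
  exact hl.1 (binj hb (by simp [hl.2]) (by simp [hj]) h.symm)

/-- sign lemma: product of signed differences -/
lemma prod_sign (hb : ∀ m : ℕ, m < k → b (m + 1) < b m) {j : ℕ} (hj : j < k + 1) :
    ∏ l ∈ (Finset.range (k + 1)).erase j, (b j - b l)
      = (-1 : ℝ) ^ j * ∏ l ∈ (Finset.range (k + 1)).erase j, |b j - b l| := by
  have hfac : ∀ l ∈ (Finset.range (k+1)).erase j,
      (b j - b l) = (if l < j then (-1:ℝ) else 1) * |b j - b l| := by
    intro l hl
    rw [Finset.mem_erase, Finset.mem_range] at hl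
    rcases Nat.lt_or_ge l j with h | h
    · have : b j < b l := bdec hb l j h (by omega)
      rw [if_pos h, abs_of_neg (by linarith), neg_one_mul, neg_neg]
    · have hlj : j < l := by omega
      have : b l < b j := bdec hb j l hlj (by omega)
      rw [if_neg (by omega), one_mul, abs_of_pos (by linarith)]
  rw [Finset.prod_congr rfl hfac, Finset.prod_mul_distrib]
  congr 1
  rw [Finset.prod_ite, Finset.prod_const, Finset.prod_const, one_pow, mul_one]
  congr 1
  have : ((Finset.range (k+1)).erase j).filter (fun l => l < j) = Finset.range j := by
    ext l
    simp only [Finset.mem_filter, Finset.mem_erase, Finset.mem_range]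
    omega
  rw [this, Finset.card_range]

/-- Lagrange identity : sum of inverses of products of differences is zero -/
lemma lagrange_zero {n : ℕ} (hn : 0 < n) (x : ℕ → ℝ)
    (hx : Set.InjOn x ↑(Finset.range (n+1))) :
    ∑ j ∈ Finset.range (n+1), ∏ l ∈ (Finset.range (n+1)).erase j, (x j - x l)⁻¹ = 0 := by
  have h1 := Lagrange.sum_basis hx (by simp : (Finset.range (n+1)).Nonempty)
  have h2 := congrArg (fun p => Polynomial.coeff p n) h1
  simp only [Polynomial.finset_sum_coeff] at h2
  have hcoeff : ∀ j ∈ Finset.range (n+1),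
      (Lagrange.basis (Finset.range (n+1)) x j).coeff n
        = ∏ l ∈ (Finset.range (n+1)).erase j, (x j - x l)⁻¹ := by
    intro j hj
    have hdeg : (Lagrange.basis (Finset.range (n+1)) x j).natDegree = n := by
      rw [Lagrange.natDegree_basis hx hj, Finset.card_range]
      omega
    set p := Lagrange.basis (Finset.range (n+1)) x j with hp
    have hlc : p.coeff n = p.leadingCoeff := by
      rw [← hdeg]; exact Polynomial.coeff_natDegree
    rw [hlc, hp, Lagrange.basis, Polynomial.leadingCoeff_prod]
    apply Finset.prod_congr rfl
    intro l hl
    rw [Lagrange.basisDivisor, Polynomial.leadingCoeff_mul, Polynomial.leadingCoeff_C,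
      (Polynomial.monic_X_sub_C (x l)).leadingCoeff, mul_one]
  rw [Finset.sum_congr rfl hcoeff] at h2
  rw [h2, Polynomial.coeff_one, if_neg (by omega)]

/-- Bt rewritten as a plain exponential sum -/
lemma Bt_eq (t : ℝ) (k : ℕ) (b : ℕ → ℝ) :
    Bt t k b = ∑ j ∈ Finset.range (k+1),
      ((-1:ℝ)^(k+j) / ∏ l ∈ (Finset.range (k+1)).erase j, |b j - b l|)
        * Real.exp (-(b j) * t) := by
  rw [Bt, Finset.mul_sum]
  apply Finset.sum_congr rfl
  intro j hj
  rw [pow_add]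
  ring

/-- Bt at time 0 vanishes for k ≥ 1 -/
lemma Bt_zero (k : ℕ) (hk : 0 < k) (b : ℕ → ℝ)
    (hb : ∀ m : ℕ, m < k → b (m + 1) < b m) :
    Bt 0 k b = 0 := by
  have hlag := lagrange_zero hk b (binj hb)
  have heq : ∑ j ∈ Finset.range (k+1), (-1:ℝ)^j * Real.exp (-(b j) * 0)
      / ∏ l ∈ (Finset.range (k+1)).erase j, |b j - b l|
      = ∑ j ∈ Finset.range (k+1), ∏ l ∈ (Finset.range (k+1)).erase j, (b j - b l)⁻¹ := by
    apply Finset.sum_congr rfl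
    intro j hj
    rw [Finset.mem_range] at hj
    rw [Finset.prod_inv_distrib]
    rw [prod_sign hb (by omega), mul_inv]
    simp only [mul_zero, Real.exp_zero, mul_one, div_eq_mul_inv]
    rw [← inv_pow, inv_neg, inv_one]
  rw [Bt, heq, hlag, mul_zero]

/-- splitting off the last node from the product -/
lemma P_split (hb : ∀ m : ℕ, m < k + 1 → b (m + 1) < b m) {j : ℕ} (hj : j < k + 1) :
    ∏ l ∈ (Finset.range (k + 2)).erase j, |b j - b l|
      = (b j - b (k + 1)) * ∏ l ∈ (Finset.range (k + 1)).erase j, |b j - b l| := by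
  have hset : (Finset.range (k + 2)).erase j
      = insert (k + 1) ((Finset.range (k + 1)).erase j) := by
    ext l
    simp only [Finset.mem_erase, Finset.mem_range, Finset.mem_insert]
    omega
  rw [hset, Finset.prod_insert (by simp)]
  congr 1
  exact abs_of_pos (by linarith [bdec hb j (k+1) hj (le_refl _)])

/-- exp(ct) * Bt as an exponential sum -/
lemma exp_mul_Bt (c t : ℝ) (k : ℕ) (b : ℕ → ℝ) :
    Real.exp (c * t) * Bt t k b = ∑ j ∈ Finset.range (k+1),
      ((-1:ℝ)^(k+j) / ∏ l ∈ (Finset.range (k+1)).erase j, |b j - b l|)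
        * Real.exp ((c - b j) * t) := by
  rw [Bt_eq, Finset.mul_sum]
  apply Finset.sum_congr rfl
  intro j hj
  have : Real.exp (c * t) * Real.exp (-(b j) * t) = Real.exp ((c - b j) * t) := by
    rw [← Real.exp_add]; congr 1; ring
  rw [← this]; ring

end aux

theorem stmt5 (k : ℕ) (b : ℕ → ℝ) (hb : ∀ m : ℕ, m < k → b (m + 1) < b m)
    (t : ℝ) (ht : 0 ≤ t) :
    0 ≤ Bt t k b := by
  revert hb t ht
  induction k with
  | zero =>
    intro hb t ht
    rw [Bt]
    norm_num
    positivity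
  | succ k ih =>
    intro hb t ht
    have hb' : ∀ m : ℕ, m < k → b (m + 1) < b m := fun m hm => hb m (by omega)
    set G : ℝ → ℝ := fun s => Real.exp (b (k+1) * s) * Bt s (k+1) b with hGdef
    have hkey : ∀ s : ℝ, HasDerivAt G (Real.exp (b (k+1) * s) * Bt s k b) s := by
      intro s
      have hfun : G = fun u => ∑ j ∈ Finset.range (k+2),
          ((-1:ℝ)^(k+1+j) / ∏ l ∈ (Finset.range (k+2)).erase j, |b j - b l|)
            * Real.exp ((b (k+1) - b j) * u) := by
        funext u
        exact exp_mul_Bt (b (k+1)) u (k+1) b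
      rw [hfun]
      have hD : HasDerivAt (fun u => ∑ j ∈ Finset.range (k+2),
          ((-1:ℝ)^(k+1+j) / ∏ l ∈ (Finset.range (k+2)).erase j, |b j - b l|)
            * Real.exp ((b (k+1) - b j) * u))
          (∑ j ∈ Finset.range (k+2),
          ((-1:ℝ)^(k+1+j) / ∏ l ∈ (Finset.range (k+2)).erase j, |b j - b l|)
            * (Real.exp ((b (k+1) - b j) * s) * ((b (k+1) - b j) * 1))) s := by
        apply HasDerivAt.fun_sum
        intro j hj
        exact (((hasDerivAt_id s).const_mul (b (k+1) - b j)).exp).const_mul _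
      convert hD using 1
      rw [exp_mul_Bt]
      conv_rhs => rw [Finset.sum_range_succ]
      have hlast : ((-1:ℝ)^(k+1+(k+1)) / ∏ l ∈ (Finset.range (k+2)).erase (k+1),
          |b (k+1) - b l|) * (Real.exp ((b (k+1) - b (k+1)) * s)
            * ((b (k+1) - b (k+1)) * 1)) = 0 := by
        rw [sub_self]; ring
      rw [hlast, add_zero]
      apply Finset.sum_congr rfl
      intro j hj
      rw [Finset.mem_range] at hj
      have hsplit := P_split hb hj
      have hd : (0:ℝ) < b j - b (k+1) := by
        linarith [bdec hb j (k+1) hj (le_refl _)]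
      have hP' : (0:ℝ) < ∏ l ∈ (Finset.range (k+1)).erase j, |b j - b l| :=
        P_pos hb' hj
      rw [hsplit, show k+1+j = (k+j)+1 by omega, pow_succ]
      field_simp
      ring
    have hG0 : G 0 = 0 := by
      rw [hGdef]
      simp only [mul_zero, Real.exp_zero, one_mul]
      exact Bt_zero (k+1) (by omega) b hb
    have hmono : MonotoneOn G (Set.Ici (0:ℝ)) := by
      apply monotoneOn_of_deriv_nonneg (convex_Ici 0)
      · exact fun s _ => ((hkey s).differentiableAt.continuousAt).continuousWithinAt
      · intro s hs
        exact (hkey s).differentiableAt.differentiableWithinAt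
      · intro s hs
        rw [interior_Ici] at hs
        rw [(hkey s).deriv]
        exact mul_nonneg (Real.exp_nonneg _) (ih hb' s (le_of_lt hs))
    have hle : G 0 ≤ G t := hmono Set.self_mem_Ici ht ht
    rw [hG0] at hle
    have hE : (0:ℝ) < Real.exp (b (k+1) * t) := Real.exp_pos _
    have hle2 : 0 ≤ Real.exp (b (k+1) * t) * Bt t (k+1) b := hle
    exact (mul_nonneg_iff_of_pos_left hE).mp hle2
end
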